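/- The group of graded ring automorphisms of S_n is isomorphic to the semidirect product (ℤ/2)ⁿ ⋊ 𝔖_n, where the symmetric group 𝔖_n acts on (ℤ/2)ⁿ by permuting the coordinates. -/

import Mathlib

/-!
Context: for n ≥ 1, S_n := ℤ[x_1,…,x_n]/(x_1², x_j² − x_1 x_j : j = 2,…,n).
The degree-2 part H² of S_n is the free abelian group with basis x_1,…,x_n.
A graded ring automorphism of S_n is a ring automorphism mapping H² onto H²;
these form a group under composition.

STATEMENT 13: The group of graded ring automorphisms of S_n is isomorphic to
the semidirect product (ℤ/2)ⁿ ⋊ 𝔖_n, where the symmetric group 𝔖_n acts on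
(ℤ/2)ⁿ by permuting the coordinates.
-/

open MvPolynomial

set_option maxHeartbeats 1000000
set_option synthInstance.maxHeartbeats 200000
set_option linter.unusedSectionVars false
set_option linter.unreachableTactic false
set_option linter.unusedTactic false

noncomputable section

/-- The defining relations x_1², x_j² − x_1 x_j (j ≥ 2) of S_n. -/
def srel (n : ℕ) (j : Fin n) : MvPolynomial (Fin n) ℤ :=
  X j ^ 2 -
    (if j.val = 0 then 0
      else X (⟨0, Nat.lt_of_le_of_lt (Nat.zero_le _) j.isLt⟩ : Fin n)) * X j

/-- S_n = ℤ[x_1,…,x_n]/(x_1², x_j² − x_1 x_j : j = 2,…,n). -/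
abbrev SRing (n : ℕ) : Type :=
  MvPolynomial (Fin n) ℤ ⧸ Ideal.span (Set.range (srel n))

/-- The image x_i of X i in S_n. -/
def sx (n : ℕ) (i : Fin n) : SRing n :=
  Ideal.Quotient.mk _ (X i)

/-- The group of graded ring automorphisms of S_n, i.e. ring automorphisms
mapping H² = spanℤ(x_1,…,x_n) onto itself. -/
def gradedAut (n : ℕ) : Subgroup (RingAut (SRing n)) where
  carrier := {φ | φ '' (Submodule.span ℤ (Set.range (sx n)) : Set (SRing n))
      = (Submodule.span ℤ (Set.range (sx n)) : Set (SRing n))}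
  mul_mem' := by
    intro a b ha hb
    simp only [Set.mem_setOf_eq] at *
    have h : ⇑(a * b) = ⇑a ∘ ⇑b := rfl
    rw [h, Set.image_comp, hb, ha]
  one_mem' := by
    simp only [Set.mem_setOf_eq]
    have h : ⇑(1 : RingAut (SRing n)) = id := rfl
    rw [h, Set.image_id]
  inv_mem' := by
    intro a ha
    simp only [Set.mem_setOf_eq] at *
    conv_lhs => rw [← ha, ← Set.image_comp]
    have h : ⇑a⁻¹ ∘ ⇑a = id := by
      funext z
      exact a.symm_apply_apply z
    rw [h, Set.image_id]

/-- The permutation action of 𝔖_m on the m-fold power of a group `M`,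
permuting the coordinates, as a homomorphism to the automorphism group. -/
def permAut (m : ℕ) (M : Type*) [Group M] :
    Equiv.Perm (Fin m) →* MulAut (Fin m → M) where
  toFun σ :=
    { toFun := fun f => f ∘ σ.symm
      invFun := fun f => f ∘ σ
      left_inv := fun f => by funext i; simp
      right_inv := fun f => by funext i; simp
      map_mul' := fun f g => rfl }
  map_one' := by ext f i; rfl
  map_mul' := fun σ τ => by ext f i; rfl


section Basic
variable (n : ℕ) [NeZero n]

omit [NeZero n] in
lemma mk_srel (j : Fin n) :
    Ideal.Quotient.mk (Ideal.span (Set.range (srel n))) (srel n j) = 0 := by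
  rw [Ideal.Quotient.eq_zero_iff_mem]
  exact Ideal.subset_span ⟨j, rfl⟩

lemma fin_zero_eq (h : 0 < n) : (⟨0, h⟩ : Fin n) = 0 := by
  ext
  simp [Fin.val_zero]

lemma srel_eq (j : Fin n) (hj : j ≠ 0) : srel n j = X j ^ 2 - X 0 * X j := by
  have hv : j.val ≠ 0 := fun h' => hj (Fin.ext h')
  rw [srel, if_neg hv, fin_zero_eq]

lemma sx_sq (j : Fin n) (hj : j ≠ 0) : sx n j ^ 2 = sx n 0 * sx n j := by
  have h := mk_srel n j
  rw [srel_eq n j hj, map_sub, map_mul, map_pow, sub_eq_zero] at h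
  simpa [sx] using h

lemma sx0_sq : sx n 0 ^ 2 = 0 := by
  have h := mk_srel n 0
  rw [srel, if_pos (by simp), zero_mul, sub_zero, map_pow] at h
  simpa [sx] using h

/-- x_i with x_0 replaced by 0. -/
def wel (i : Fin n) : SRing n := if i = 0 then 0 else sx n i

lemma wel_sq (k : Fin n) : wel n k ^ 2 = sx n 0 * wel n k := by
  by_cases h : k = 0
  · simp only [wel, if_pos h]; ring
  · simp only [wel, if_neg h]
    exact sx_sq n k h

variable {R : Type*} [CommRing R]

/-- Lift an assignment satisfying the relations to a ring hom on `SRing n`. -/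
def liftS (v : Fin n → R) (h0 : v 0 ^ 2 = 0)
    (h : ∀ j : Fin n, j ≠ 0 → v j ^ 2 = v 0 * v j) : SRing n →+* R :=
  Ideal.Quotient.lift _ (eval₂Hom (Int.castRingHom R) v) (by
    intro p hp
    refine Submodule.span_induction ?_ ?_ ?_ ?_ hp
    · rintro q ⟨j, rfl⟩
      by_cases hj : j = 0
      · subst hj
        rw [srel, if_pos (by simp), zero_mul, sub_zero]
        simpa using h0
      · rw [srel_eq n j hj]
        simp only [coe_eval₂Hom, map_sub, map_mul, map_pow, eval₂_X]
        rw [h j hj]; ring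
    · simp
    · intro a b _ _ ha hb
      simp only [coe_eval₂Hom] at ha hb ⊢
      rw [eval₂_add, ha, hb, add_zero]
    · intro a b _ hb
      simp only [coe_eval₂Hom, smul_eq_mul] at hb ⊢
      rw [eval₂_mul, hb, mul_zero])

@[simp] lemma liftS_sx (v : Fin n → R) (h0 : v 0 ^ 2 = 0)
    (h : ∀ j : Fin n, j ≠ 0 → v j ^ 2 = v 0 * v j) (i : Fin n) :
    liftS n v h0 h (sx n i) = v i := by
  simp [liftS, sx]

omit [NeZero n] in
lemma hom_ext {f g : SRing n →+* R} (hfg : ∀ i, f (sx n i) = g (sx n i)) : f = g := by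
  have : f.comp (Ideal.Quotient.mk _) = g.comp (Ideal.Quotient.mk _) := by
    apply MvPolynomial.ringHom_ext
    · intro r
      have h2 : (f.comp (Ideal.Quotient.mk _)).comp (C : ℤ →+* _) =
          (g.comp (Ideal.Quotient.mk _)).comp (C : ℤ →+* _) := Subsingleton.elim _ _
      exact RingHom.congr_fun h2 r
    · intro i
      simpa [sx] using hfg i
  exact RingHom.ext fun x => by
    obtain ⟨p, rfl⟩ := Ideal.Quotient.mk_surjective x
    exact RingHom.congr_fun this p

end Basic


section Detect
open TrivSqZeroExt

abbrev DQ := DualNumber ℚ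
abbrev EQ := DualNumber DQ

def epso : EQ := TrivSqZeroExt.inl (DualNumber.eps)
def epsi : EQ := DualNumber.eps

lemma epso_sq : epso * epso = 0 := by
  simp [epso, ← TrivSqZeroExt.inl_mul, DualNumber.eps_mul_eps]

lemma epsi_sq : epsi * epsi = 0 := DualNumber.eps_mul_eps

lemma key1 {a : ℚ} (h : a • (DualNumber.eps : DQ) = 0) : a = 0 := by
  have := congrArg TrivSqZeroExt.snd h
  simpa using this

set_option maxRecDepth 8000 in
lemma key2 {a b : ℚ} (h : (a • epso + b • epsi)^2 = 0) : a * b = 0 := by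
  have := congrArg (fun z : EQ => TrivSqZeroExt.snd (TrivSqZeroExt.snd z)) h
  simp only [pow_two, epso, epsi, TrivSqZeroExt.snd_mul, TrivSqZeroExt.fst_add,
    TrivSqZeroExt.snd_add, TrivSqZeroExt.fst_smul, TrivSqZeroExt.snd_smul,
    TrivSqZeroExt.fst_inl, TrivSqZeroExt.snd_inl, TrivSqZeroExt.snd_zero,
    DualNumber.fst_eps, DualNumber.snd_eps, smul_zero, zero_add, add_zero, smul_eq_mul,
    TrivSqZeroExt.fst_one, TrivSqZeroExt.snd_one, MulOpposite.smul_eq_mul_unop,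
    MulOpposite.unop_op, mul_one, mul_zero, zero_mul, one_mul] at this
  linarith

lemma quadform (a b a' b' : ℚ) : (a • epso + b • epsi) * (a' • epso + b' • epsi)
    = (a * b' + a' * b) • (epso * epsi) := by
  rw [add_mul, mul_add, mul_add, smul_mul_smul_comm, smul_mul_smul_comm,
    smul_mul_smul_comm, smul_mul_smul_comm, epso_sq, epsi_sq,
    mul_comm epsi epso, smul_zero, smul_zero, add_zero, zero_add, ← add_smul]
  ring_nf

variable (n : ℕ) [NeZero n]

/-- Linear detection homomorphism. -/
def flin (b : Fin n → ℚ) : SRing n →+* DQ :=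
  liftS n (fun i => b i • DualNumber.eps)
    (by rw [pow_two, smul_mul_smul_comm, DualNumber.eps_mul_eps, smul_zero])
    (by intro j _
        rw [pow_two, smul_mul_smul_comm, smul_mul_smul_comm, DualNumber.eps_mul_eps,
          smul_zero, smul_zero])

@[simp] lemma flin_sx (b : Fin n → ℚ) (i : Fin n) :
    flin n b (sx n i) = b i • DualNumber.eps := liftS_sx n _ _ _ i

lemma flin_wel (b : Fin n → ℚ) (k : Fin n) :
    flin n b (wel n k) = (if k = 0 then 0 else b k) • DualNumber.eps := by
  by_cases h : k = 0 <;> simp [wel, h]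

/-- Quadratic detection homomorphism. -/
def fquad (β γ : Fin n → ℚ) (hq0 : β 0 * γ 0 = 0)
    (hq : ∀ j : Fin n, j ≠ 0 → 2 * (β j * γ j) = β 0 * γ j + β j * γ 0) :
    SRing n →+* EQ :=
  liftS n (fun i => β i • epso + γ i • epsi)
    (by rw [pow_two, quadform]
        have : β 0 * γ 0 + β 0 * γ 0 = 0 := by rw [hq0]; ring
        rw [this, zero_smul])
    (by intro j hj
        rw [pow_two, quadform, quadform]
        congr 1
        have := hq j hj
        ring_nf
        ring_nf at this
        linarith)

@[simp] lemma fquad_sx (β γ : Fin n → ℚ) (hq0) (hq) (i : Fin n) :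
    fquad n β γ hq0 hq (sx n i) = β i • epso + γ i • epsi := liftS_sx n _ _ _ i

/-- Linear independence of the x_i. -/
lemma sx_indep {c : Fin n → ℤ} (h : ∑ i, c i • sx n i = 0) : ∀ k, c k = 0 := by
  intro k
  have h2 := congrArg (flin n (fun i => if i = k then 1 else 0)) h
  rw [map_sum, map_zero] at h2
  simp only [map_zsmul, flin_sx] at h2
  have h3 : ∀ i, (c i : ℤ) • ((if i = k then (1:ℚ) else 0) • (DualNumber.eps : DQ))
      = ((if i = k then (c i : ℚ) else 0)) • (DualNumber.eps : DQ) := by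
    intro i
    rw [← Int.cast_smul_eq_zsmul ℚ, smul_smul]
    by_cases hik : i = k <;> simp [hik]
  simp only [h3, ← Finset.sum_smul] at h2
  have h4 : (∑ i, if i = k then (c i : ℚ) else 0) = (c k : ℚ) := by
    simp [Finset.sum_ite_eq']
  rw [h4] at h2
  exact_mod_cast key1 h2

/-- The quadratic consequence extractor. -/
lemma quad_eq (β γ : Fin n → ℚ) (hq0 : β 0 * γ 0 = 0)
    (hq : ∀ j : Fin n, j ≠ 0 → 2 * (β j * γ j) = β 0 * γ j + β j * γ 0)
    {c : Fin n → ℤ} (h : (∑ i, c i • sx n i)^2 = 0) :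
    (∑ i, (c i : ℚ) * β i) * (∑ i, (c i : ℚ) * γ i) = 0 := by
  have h2 := congrArg (fquad n β γ hq0 hq) h
  rw [map_pow, map_zero, map_sum] at h2
  simp only [map_zsmul, fquad_sx] at h2
  have h3 : ∀ i, (c i : ℤ) • (β i • epso + γ i • epsi)
      = ((c i : ℚ) * β i) • epso + ((c i : ℚ) * γ i) • epsi := by
    intro i
    rw [smul_add, ← Int.cast_smul_eq_zsmul ℚ, ← Int.cast_smul_eq_zsmul ℚ,
      smul_smul, smul_smul]
  simp only [h3] at h2
  rw [Finset.sum_add_distrib, ← Finset.sum_smul, ← Finset.sum_smul] at h2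
  exact key2 h2

end Detect


section Zel
variable (n : ℕ) [NeZero n]

def zel (k : Fin n) : SRing n := sx n 0 - (2:ℤ) • wel n k

lemma zel_eq_mul (k : Fin n) : zel n k = sx n 0 - 2 * wel n k := by
  rw [zel, zsmul_eq_mul]; push_cast; ring

lemma zel_zero : zel n 0 = sx n 0 := by simp [zel, wel]

lemma zel_sq (k : Fin n) : zel n k ^ 2 = 0 := by
  rw [zel_eq_mul]
  have h0 := sx0_sq n
  have hw := wel_sq n k
  linear_combination h0 + 4 * hw

lemma zel_eq_add (k : Fin n) : zel n k = sx n 0 - (wel n k + wel n k) := by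
  rw [zel, two_zsmul]

lemma flin_zel (b : Fin n → ℚ) (k : Fin n) :
    flin n b (zel n k) = (b 0 - 2 * (if k = 0 then 0 else b k)) • (DualNumber.eps : DQ) := by
  rw [zel_eq_add, map_sub, map_add, flin_sx, flin_wel]
  by_cases h : k = 0
  · simp only [if_pos h]
    module
  · simp only [if_neg h]
    module

lemma zel_inj {d d' : ℤ} {k k' : Fin n} (h : d • zel n k = d' • zel n k') :
    d = d' ∧ (d ≠ 0 → k = k') := by
  have key : ∀ (b : Fin n → ℚ) (e e' : ℚ),
      flin n b (zel n k) = e • (DualNumber.eps : DQ) →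
      flin n b (zel n k') = e' • (DualNumber.eps : DQ) →
      (d : ℚ) * e = (d' : ℚ) * e' := by
    intro b e e' he he'
    have h2 := congrArg (flin n b) h
    rw [map_zsmul, map_zsmul, he, he', ← Int.cast_smul_eq_zsmul ℚ,
      ← Int.cast_smul_eq_zsmul ℚ, smul_smul, smul_smul] at h2
    have h3 : ((d:ℚ) * e - (d':ℚ) * e') • (DualNumber.eps : DQ) = 0 := by
      rw [sub_smul, h2, sub_self]
    have := key1 h3
    linarith
  have flin_one : ∀ m : Fin n, flin n (fun i => if i = 0 then 1 else 0) (zel n m)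
      = (1:ℚ) • (DualNumber.eps : DQ) := by
    intro m
    rw [flin_zel]
    by_cases h : m = 0 <;> simp [h]
  have hd : d = d' := by
    have := key _ _ _ (flin_one k) (flin_one k')
    exact_mod_cast by simpa using this
  refine ⟨hd, fun hdne => ?_⟩
  by_contra hkk
  -- k ≠ k'
  rcases eq_or_ne k 0 with hk0 | hk0
  · -- then k' ≠ 0
    have hk'0 : k' ≠ 0 := fun h' => hkk (by rw [hk0, h'])
    have h1 : flin n (fun i => if i = k' then 1 else 0) (zel n k)
        = (0:ℚ) • (DualNumber.eps : DQ) := by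
      rw [flin_zel]; simp [hk0, Ne.symm hk'0]
    have h2 : flin n (fun i => if i = k' then 1 else 0) (zel n k')
        = (-2:ℚ) • (DualNumber.eps : DQ) := by
      rw [flin_zel]; simp [hk'0, Ne.symm hk'0]
    have := key _ _ _ h1 h2
    rw [mul_zero] at this
    have : (d':ℚ) = 0 := by linarith [this]
    rw [← hd] at this
    exact hdne (by exact_mod_cast this)
  · have h1 : flin n (fun i => if i = k then 1 else 0) (zel n k)
        = (-2:ℚ) • (DualNumber.eps : DQ) := by
      rw [flin_zel]; simp [hk0, Ne.symm hk0]
    have h2 : flin n (fun i => if i = k then 1 else 0) (zel n k')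
        = (0:ℚ) • (DualNumber.eps : DQ) := by
      rw [flin_zel]
      by_cases hk'0 : k' = 0
      · simp [hk'0, Ne.symm hk0]
      · simp [hk'0, Ne.symm hk0, Ne.symm hkk]
    have := key _ _ _ h1 h2
    rw [mul_zero] at this
    have : (d:ℚ) = 0 := by linarith [this]
    exact hdne (by exact_mod_cast this)

/-- classification of square-zero elements of H². -/
lemma sq_zero_classify {y : SRing n}
    (hy : y ∈ Submodule.span ℤ (Set.range (sx n))) (h2 : y ^ 2 = 0) :
    ∃ (d : ℤ) (k : Fin n), y = d • zel n k := by
  obtain ⟨c, hc⟩ := (Submodule.mem_span_range_iff_exists_fun ℤ).mp hy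
  rw [← hc] at h2
  -- equation A: for b ≠ 0, c b * (2 c 0 + c b) = 0
  have eqA : ∀ b : Fin n, b ≠ 0 → c b * (2 * c 0 + c b) = 0 := by
    intro b hb
    have hq := quad_eq n (fun i => (if i = 0 then 1 else 0) + (if i = b then 1/2 else 0))
      (fun i => if i = b then 1 else 0)
      (by simp [Ne.symm hb])
      (by intro j hj
          by_cases hjb : j = b <;> simp [hjb, hj, hb, Ne.symm hb] <;> norm_num) h2
    have s1 : (∑ i, (c i : ℚ) * ((if i = 0 then 1 else 0) + (if i = b then 1/2 else 0)))
        = (c 0 : ℚ) + (c b : ℚ) * (1/2) := by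
      simp only [mul_add]
      rw [Finset.sum_add_distrib]
      congr 1
      · rw [Finset.sum_congr rfl (fun i _ => by
          rw [mul_ite, mul_one, mul_zero])]
        simp [Finset.sum_ite_eq']
      · rw [Finset.sum_congr rfl (fun i _ => by
          rw [mul_ite, mul_zero])]
        simp [Finset.sum_ite_eq']
    have s2 : (∑ i, (c i : ℚ) * (if i = b then 1 else 0)) = (c b : ℚ) := by
      rw [Finset.sum_congr rfl (fun i _ => by rw [mul_ite, mul_one, mul_zero])]
      simp [Finset.sum_ite_eq']
    rw [s1, s2] at hq
    have : (c b : ℚ) * (2 * (c 0 : ℚ) + (c b : ℚ)) = 0 := by linear_combination 2 * hq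
    exact_mod_cast this
  have eqB : ∀ a b : Fin n, a ≠ 0 → b ≠ 0 → a ≠ b → c a * c b = 0 := by
    intro a b ha hb hab
    have hq := quad_eq n (fun i => if i = a then 1 else 0) (fun i => if i = b then 1 else 0)
      (by simp [Ne.symm ha])
      (by intro j hj
          by_cases hja : j = a <;> by_cases hjb : j = b <;>
            simp_all [Ne.symm ha, Ne.symm hb]) h2
    have s1 : (∑ i, (c i : ℚ) * (if i = a then 1 else 0)) = (c a : ℚ) := by
      rw [Finset.sum_congr rfl (fun i _ => by rw [mul_ite, mul_one, mul_zero])]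
      simp [Finset.sum_ite_eq']
    have s2 : (∑ i, (c i : ℚ) * (if i = b then 1 else 0)) = (c b : ℚ) := by
      rw [Finset.sum_congr rfl (fun i _ => by rw [mul_ite, mul_one, mul_zero])]
      simp [Finset.sum_ite_eq']
    rw [s1, s2] at hq
    exact_mod_cast hq
  by_cases hall : ∀ b : Fin n, b ≠ 0 → c b = 0
  · refine ⟨c 0, 0, ?_⟩
    rw [← hc, zel_zero]
    rw [Finset.sum_eq_single 0]
    · intro i _ hi
      rw [hall i hi, zero_smul]
    · intro h; exact absurd (Finset.mem_univ 0) h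
  · push_neg at hall
    obtain ⟨b, hb0, hcb⟩ := hall
    have hcbval : c b = -2 * c 0 := by
      have := eqA b hb0
      rcases mul_eq_zero.mp this with h | h
      · exact absurd h hcb
      · linarith
    refine ⟨c 0, b, ?_⟩
    rw [← hc, zel]
    have hz : ∀ i ∈ Finset.univ \ {0, b}, c i • sx n i = 0 := by
      intro i hi
      simp only [Finset.mem_sdiff, Finset.mem_univ, Finset.mem_insert,
        Finset.mem_singleton, true_and, not_or] at hi
      rcases mul_eq_zero.mp (eqB i b hi.1 hb0 hi.2) with h | h
      · rw [h, zero_smul]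
      · exact absurd h hcb
    rw [← Finset.sum_subset (Finset.subset_univ ({0, b} : Finset (Fin n)))
      (fun i _ hi => hz i (Finset.mem_sdiff.mpr ⟨Finset.mem_univ i, hi⟩))]
    rw [Finset.sum_pair (Ne.symm hb0)]
    simp only [wel, if_neg hb0]
    rw [hcbval]
    module

end Zel

section Phi

abbrev GG (n : ℕ) := SemidirectProduct (Fin n → Multiplicative (ZMod 2)) (Equiv.Perm (Fin n))
  (permAut n (Multiplicative (ZMod 2)))

def sgn (e : Multiplicative (ZMod 2)) : ℤ := if e = 1 then 1 else -1

lemma sgn_mul : ∀ e e' : Multiplicative (ZMod 2), sgn (e * e') = sgn e * sgn e' := by decide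

lemma sgn_mul_self : ∀ e : Multiplicative (ZMod 2), sgn e * sgn e = 1 := by decide

lemma sgn_eq_one : ∀ e : Multiplicative (ZMod 2), sgn e = 1 → e = 1 := by decide

lemma sgn_aux : ∀ a b : Multiplicative (ZMod 2),
    2 * (if b = a then 0 else sgn a) = sgn a - sgn b := by decide

variable (n : ℕ) [NeZero n]

def eta (g : GG n) (k : Fin n) : ℤ := sgn (g.left (g.right k))

def cc (g : GG n) (k : Fin n) : ℤ :=
  if g.left (g.right k) = g.left (g.right 0) then 0 else eta n g 0

lemma eta_sq (g : GG n) (k : Fin n) : eta n g k * eta n g k = 1 := sgn_mul_self _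

lemma cc_spec (g : GG n) (k : Fin n) : 2 * cc n g k = eta n g 0 - eta n g k :=
  sgn_aux _ _

lemma cc_zero (g : GG n) : cc n g 0 = 0 := if_pos rfl

lemma eta_mul (g h : GG n) (k : Fin n) :
    eta n (g * h) k = eta n g (h.right k) * eta n h k := by
  unfold eta
  rw [SemidirectProduct.mul_left, SemidirectProduct.mul_right]
  have : (permAut n (Multiplicative (ZMod 2)) g.right h.left)
      ((g.right * h.right) k) = h.left (h.right k) := by
    show h.left (g.right.symm (g.right (h.right k))) = _
    rw [Equiv.symm_apply_apply]
  rw [Pi.mul_apply, this]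
  show sgn (g.left (g.right (h.right k)) * h.left (h.right k)) = _
  rw [sgn_mul]

lemma cc_mul (g h : GG n) (i : Fin n) :
    cc n (g * h) i = cc n h i * eta n g 0
      - eta n h 0 * cc n g (h.right 0) + eta n h i * cc n g (h.right i) := by
  have h1 := cc_spec n (g * h) i
  rw [eta_mul, eta_mul] at h1
  have h2 := cc_spec n h i
  have h3 := cc_spec n g (h.right 0)
  have h4 := cc_spec n g (h.right i)
  have key : 2 * cc n (g * h) i = 2 * (cc n h i * eta n g 0
      - eta n h 0 * cc n g (h.right 0) + eta n h i * cc n g (h.right i)) := by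
    linear_combination h1 - eta n g 0 * h2 + eta n h 0 * h3 - eta n h i * h4
  linarith

/-- the target of X i under the automorphism attached to g. -/
def tvec (g : GG n) (i : Fin n) : SRing n :=
  if i = 0 then ((eta n g 0 : ℤ) : SRing n) * (sx n 0 - 2 * wel n (g.right 0))
  else ((cc n g i : ℤ) : SRing n) * sx n 0
    - ((eta n g 0 : ℤ) : SRing n) * wel n (g.right 0)
    + ((eta n g i : ℤ) : SRing n) * wel n (g.right i)

lemma tvec_zero (g : GG n) :
    tvec n g 0 = ((eta n g 0 : ℤ) : SRing n) * (sx n 0 - 2 * wel n (g.right 0)) := if_pos rfl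

lemma tvec_sq_zero (g : GG n) : tvec n g 0 ^ 2 = 0 := by
  rw [tvec_zero, mul_pow, ← zel_eq_mul, zel_sq, mul_zero]

lemma tvec_rel (g : GG n) (j : Fin n) (hj : j ≠ 0) :
    tvec n g j ^ 2 = tvec n g 0 * tvec n g j := by
  rw [tvec_zero, tvec, if_neg hj]
  set x0 := sx n 0
  set wa := wel n (g.right 0)
  set wb := wel n (g.right j)
  have h0 : x0 ^ 2 = 0 := sx0_sq n
  have hwa : wa ^ 2 = x0 * wa := wel_sq n _
  have hwb : wb ^ 2 = x0 * wb := wel_sq n _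
  have he0 : ((eta n g 0 : ℤ) : SRing n) * ((eta n g 0 : ℤ) : SRing n) = 1 := by
    rw [← Int.cast_mul, eta_sq]; exact Int.cast_one
  have hej : ((eta n g j : ℤ) : SRing n) * ((eta n g j : ℤ) : SRing n) = 1 := by
    rw [← Int.cast_mul, eta_sq]; exact Int.cast_one
  have hc : 2 * ((cc n g j : ℤ) : SRing n)
      = ((eta n g 0 : ℤ) : SRing n) - ((eta n g j : ℤ) : SRing n) := by
    rw [← Int.cast_sub, ← cc_spec]; push_cast; ring
  set c := ((cc n g j : ℤ) : SRing n)
  set e0 := ((eta n g 0 : ℤ) : SRing n)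
  set ej := ((eta n g j : ℤ) : SRing n)
  linear_combination (c^2 - c*e0) * h0 - e0*e0 * hwa + ej*ej * hwb + (x0*wb*ej) * hc

def Phi (g : GG n) : SRing n →+* SRing n :=
  liftS n (tvec n g) (tvec_sq_zero n g) (tvec_rel n g)

@[simp] lemma Phi_sx (g : GG n) (i : Fin n) : Phi n g (sx n i) = tvec n g i :=
  liftS_sx n _ _ _ i

lemma Phi_wel (g : GG n) (k : Fin n) :
    Phi n g (wel n k) = ((cc n g k : ℤ) : SRing n) * sx n 0
      - ((eta n g 0 : ℤ) : SRing n) * wel n (g.right 0)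
      + ((eta n g k : ℤ) : SRing n) * wel n (g.right k) := by
  by_cases h : k = 0
  · subst h
    rw [cc_zero]
    have hw0 : wel n (0 : Fin n) = 0 := if_pos rfl
    rw [hw0, map_zero]
    push_cast
    ring
  · rw [wel, if_neg h, Phi_sx, tvec, if_neg h]

lemma Phi_comp (g h : GG n) : (Phi n g).comp (Phi n h) = Phi n (g * h) := by
  apply hom_ext
  intro i
  rw [RingHom.comp_apply, Phi_sx, Phi_sx]
  have hgh_right : ∀ m, (g * h).right m = g.right (h.right m) := fun m => rfl
  by_cases hi : i = 0
  · subst hi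
    rw [tvec_zero, tvec_zero, map_mul, map_intCast, map_sub, map_mul, map_ofNat,
      Phi_sx, tvec_zero, Phi_wel, hgh_right]
    have he : ((eta n (g*h) 0 : ℤ) : SRing n)
        = ((eta n g (h.right 0) : ℤ) : SRing n) * ((eta n h 0 : ℤ) : SRing n) := by
      rw [← Int.cast_mul, eta_mul]
    have hc : 2 * ((cc n g (h.right 0) : ℤ) : SRing n)
        = ((eta n g 0 : ℤ) : SRing n) - ((eta n g (h.right 0) : ℤ) : SRing n) := by
      rw [← Int.cast_sub, ← cc_spec]; push_cast; ring
    set x0 := sx n 0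
    set w0 := wel n (g.right 0)
    set wa := wel n (g.right (h.right 0))
    set Eh0 := ((eta n h 0 : ℤ) : SRing n)
    set Eg0 := ((eta n g 0 : ℤ) : SRing n)
    set Ega := ((eta n g (h.right 0) : ℤ) : SRing n)
    set Ca := ((cc n g (h.right 0) : ℤ) : SRing n)
    rw [he]
    linear_combination (-(Eh0 * x0)) * hc
  · rw [tvec, if_neg hi, tvec, if_neg hi, map_add, map_sub, map_mul, map_mul, map_mul,
      map_intCast, map_intCast, map_intCast, Phi_sx, tvec_zero, Phi_wel, Phi_wel,
      hgh_right, hgh_right]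
    have he0 : ((eta n (g*h) 0 : ℤ) : SRing n)
        = ((eta n g (h.right 0) : ℤ) : SRing n) * ((eta n h 0 : ℤ) : SRing n) := by
      rw [← Int.cast_mul, eta_mul]
    have hei : ((eta n (g*h) i : ℤ) : SRing n)
        = ((eta n g (h.right i) : ℤ) : SRing n) * ((eta n h i : ℤ) : SRing n) := by
      rw [← Int.cast_mul, eta_mul]
    have hcc : ((cc n (g*h) i : ℤ) : SRing n)
        = ((cc n h i : ℤ) : SRing n) * ((eta n g 0 : ℤ) : SRing n)
          - ((eta n h 0 : ℤ) : SRing n) * ((cc n g (h.right 0) : ℤ) : SRing n)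
          + ((eta n h i : ℤ) : SRing n) * ((cc n g (h.right i) : ℤ) : SRing n) := by
      rw [cc_mul]; push_cast; ring
    have hch : 2 * ((cc n h i : ℤ) : SRing n)
        = ((eta n h 0 : ℤ) : SRing n) - ((eta n h i : ℤ) : SRing n) := by
      rw [← Int.cast_sub, ← cc_spec]; push_cast; ring
    set x0 := sx n 0
    set w0 := wel n (g.right 0)
    set wa := wel n (g.right (h.right 0))
    set wb := wel n (g.right (h.right i))
    rw [he0, hei, hcc]
    linear_combination (- (((eta n g 0 : ℤ) : SRing n)) * w0) * hch

lemma Phi_one : Phi n 1 = RingHom.id (SRing n) := by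
  apply hom_ext
  intro i
  rw [Phi_sx, RingHom.id_apply]
  have hone : ∀ k : Fin n, (1 : GG n).left ((1 : GG n).right k) = 1 := fun k => rfl
  have heta : ∀ k, eta n (1 : GG n) k = 1 := fun k => by
    unfold eta; rw [hone]; rfl
  have hright : (1 : GG n).right = 1 := rfl
  by_cases hi : i = 0
  · subst hi
    rw [tvec_zero, heta, hright]
    simp [wel]
  · rw [tvec, if_neg hi, heta, heta, hright]
    have hcc : cc n (1 : GG n) i = 0 := by
      unfold cc; rw [hone, hone, if_pos rfl]
    rw [hcc]
    show ((0:ℤ):SRing n) * sx n 0 - ((1:ℤ):SRing n) * wel n ((1 : Equiv.Perm (Fin n)) 0)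
      + ((1:ℤ):SRing n) * wel n ((1 : Equiv.Perm (Fin n)) i) = sx n i
    simp only [Int.cast_zero, Int.cast_one, zero_mul, one_mul, Equiv.Perm.one_apply]
    rw [wel, if_pos rfl, wel, if_neg hi]
    ring

def PhiAut (g : GG n) : RingAut (SRing n) where
  toFun := Phi n g
  invFun := Phi n g⁻¹
  left_inv := fun y => by
    have h := Phi_comp n g⁻¹ g
    rw [inv_mul_cancel, Phi_one] at h
    exact RingHom.congr_fun h y
  right_inv := fun y => by
    have h := Phi_comp n g g⁻¹
    rw [mul_inv_cancel, Phi_one] at h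
    exact RingHom.congr_fun h y
  map_mul' := map_mul (Phi n g)
  map_add' := map_add (Phi n g)

lemma PhiAut_apply (g : GG n) (y : SRing n) : PhiAut n g y = Phi n g y := rfl

def PhiHom : GG n →* RingAut (SRing n) :=
  MonoidHom.mk' (PhiAut n) (by
    intro g h
    apply RingEquiv.ext
    intro y
    show Phi n (g * h) y = Phi n g (Phi n h y)
    rw [← Phi_comp, RingHom.comp_apply])

end Phi


section Final
variable (n : ℕ) [NeZero n]

lemma sx_mem (i : Fin n) : sx n i ∈ Submodule.span ℤ (Set.range (sx n)) :=
  Submodule.subset_span ⟨i, rfl⟩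

lemma wel_mem (k : Fin n) : wel n k ∈ Submodule.span ℤ (Set.range (sx n)) := by
  by_cases h : k = 0
  · rw [wel, if_pos h]; exact Submodule.zero_mem _
  · rw [wel, if_neg h]; exact sx_mem n k

lemma zel_mem (k : Fin n) : zel n k ∈ Submodule.span ℤ (Set.range (sx n)) :=
  sub_mem (sx_mem n 0) (Submodule.smul_mem _ _ (wel_mem n k))

lemma cast_mul_mem (m : ℤ) {v : SRing n} (hv : v ∈ Submodule.span ℤ (Set.range (sx n))) :
    ((m : ℤ) : SRing n) * v ∈ Submodule.span ℤ (Set.range (sx n)) := by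
  rw [← zsmul_eq_mul]
  exact Submodule.smul_mem _ _ hv

lemma tvec_mem (g : GG n) (i : Fin n) :
    tvec n g i ∈ Submodule.span ℤ (Set.range (sx n)) := by
  unfold tvec
  by_cases h : i = 0
  · rw [if_pos h]
    refine cast_mul_mem n _ (sub_mem (sx_mem n 0) ?_)
    rw [two_mul]
    exact add_mem (wel_mem n _) (wel_mem n _)
  · rw [if_neg h]
    exact add_mem (sub_mem (cast_mul_mem n _ (sx_mem n 0)) (cast_mul_mem n _ (wel_mem n _)))
      (cast_mul_mem n _ (wel_mem n _))

lemma Phi_mem (g : GG n) {y : SRing n} (hy : y ∈ Submodule.span ℤ (Set.range (sx n))) :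
    Phi n g y ∈ Submodule.span ℤ (Set.range (sx n)) := by
  refine Submodule.span_induction ?_ ?_ ?_ ?_ hy
  · rintro _ ⟨i, rfl⟩
    rw [Phi_sx]
    exact tvec_mem n g i
  · rw [map_zero]; exact Submodule.zero_mem _
  · intro a b _ _ ha hb
    rw [map_add]; exact add_mem ha hb
  · intro m a _ ha
    rw [map_zsmul]; exact Submodule.smul_mem _ _ ha

lemma PhiAut_mem (g : GG n) : PhiAut n g ∈ gradedAut n := by
  show PhiAut n g '' (Submodule.span ℤ (Set.range (sx n)) : Set (SRing n)) = _
  apply Set.Subset.antisymm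
  · rintro _ ⟨y, hy, rfl⟩
    exact Phi_mem n g hy
  · intro y hy
    refine ⟨Phi n g⁻¹ y, Phi_mem n g⁻¹ hy, ?_⟩
    show Phi n g (Phi n g⁻¹ y) = y
    have h := Phi_comp n g g⁻¹
    rw [mul_inv_cancel, Phi_one] at h
    exact RingHom.congr_fun h y

def Psi : GG n →* gradedAut n :=
  (PhiHom n).codRestrict (gradedAut n) (PhiAut_mem n)

lemma Phi_zel (g : GG n) (k : Fin n) :
    Phi n g (zel n k) = (eta n g k) • zel n (g.right k) := by
  rw [zel, map_sub, map_zsmul, Phi_sx, tvec_zero, Phi_wel, zel]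
  have hc : 2 * ((cc n g k : ℤ) : SRing n)
      = ((eta n g 0 : ℤ) : SRing n) - ((eta n g k : ℤ) : SRing n) := by
    rw [← Int.cast_sub, ← cc_spec]; push_cast; ring
  rw [zsmul_eq_mul, zsmul_eq_mul, zsmul_eq_mul]
  push_cast
  set x0 := sx n 0
  set w0 := wel n (g.right 0)
  set wk := wel n (g.right k)
  linear_combination (-(x0)) * hc

lemma Psi_inj : Function.Injective (Psi n) := by
  rw [injective_iff_map_eq_one]
  intro g hg
  have hval : PhiAut n g = 1 := Subtype.ext_iff.mp hg
  have happ : ∀ y, Phi n g y = y := fun y => by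
    have := congrArg (fun e : RingAut (SRing n) => e y) hval
    exact this
  have hz : ∀ k, (eta n g k) • zel n (g.right k) = (1:ℤ) • zel n k := fun k => by
    rw [← Phi_zel, happ, one_smul]
  have hdk : ∀ k, eta n g k = 1 ∧ g.right k = k := fun k => by
    obtain ⟨h1, h2⟩ := zel_inj n (hz k)
    exact ⟨h1, h2 (by rw [h1]; exact one_ne_zero)⟩
  have hright : g.right = 1 := by
    apply Equiv.ext
    intro k
    exact (hdk k).2
  have hleft : g.left = 1 := by
    funext k
    have h1 := (hdk k).1
    rw [eta, (hdk k).2] at h1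
    exact sgn_eq_one _ h1
  exact SemidirectProduct.ext hleft hright

lemma H2_twotorsion {u : SRing n} (hu : u ∈ Submodule.span ℤ (Set.range (sx n)))
    (h2 : (2:ℤ) • u = 0) : u = 0 := by
  obtain ⟨c, hc⟩ := (Submodule.mem_span_range_iff_exists_fun ℤ).mp hu
  rw [← hc, Finset.smul_sum] at h2
  simp only [smul_smul] at h2
  have := sx_indep n h2
  rw [← hc]
  apply Finset.sum_eq_zero
  intro i _
  have : c i = 0 := by have h := this i; omega
  rw [this, zero_smul]

lemma Psi_surj : Function.Surjective (Psi n) := by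
  rintro ⟨φ, hφ⟩
  have himg : φ '' (Submodule.span ℤ (Set.range (sx n)) : Set (SRing n))
      = (Submodule.span ℤ (Set.range (sx n)) : Set (SRing n)) := hφ
  have fwd : ∀ {y : SRing n}, y ∈ Submodule.span ℤ (Set.range (sx n)) →
      φ y ∈ Submodule.span ℤ (Set.range (sx n)) := by
    intro y hy
    have : φ y ∈ φ '' (Submodule.span ℤ (Set.range (sx n)) : Set (SRing n)) :=
      ⟨y, hy, rfl⟩
    rw [himg] at this
    exact this
  have bwd : ∀ {y : SRing n}, y ∈ Submodule.span ℤ (Set.range (sx n)) →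
      φ.symm y ∈ Submodule.span ℤ (Set.range (sx n)) := by
    intro y hy
    have hy' : y ∈ φ '' (Submodule.span ℤ (Set.range (sx n)) : Set (SRing n)) := by
      rw [himg]; exact hy
    obtain ⟨u, hu, rfl⟩ := hy'
    rw [RingEquiv.symm_apply_apply]
    exact hu
  have hcl : ∀ k, ∃ (d : ℤ) (m : Fin n), φ (zel n k) = d • zel n m := by
    intro k
    refine sq_zero_classify n (fwd (zel_mem n k)) ?_
    rw [← map_pow, zel_sq, map_zero]
  have hcl' : ∀ k, ∃ (d : ℤ) (m : Fin n), φ.symm (zel n k) = d • zel n m := by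
    intro k
    refine sq_zero_classify n (bwd (zel_mem n k)) ?_
    rw [← map_pow, zel_sq, map_zero]
  choose d τ hdτ using hcl
  choose d' τ' hdτ' using hcl'
  have hcomp : ∀ k, (d k * d' (τ k)) • zel n (τ' (τ k)) = (1:ℤ) • zel n k := by
    intro k
    rw [one_smul, ← smul_smul, ← hdτ', ← map_zsmul, ← hdτ, RingEquiv.symm_apply_apply]
  have hunit : ∀ k, d k * d' (τ k) = 1 := fun k => (zel_inj n (hcomp k)).1
  have hτfix : ∀ k, τ' (τ k) = k := fun k =>
    (zel_inj n (hcomp k)).2 (by rw [hunit k]; exact one_ne_zero)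
  have hτinj : Function.Injective τ := fun a b hab => by
    have := congrArg τ' hab
    rwa [hτfix, hτfix] at this
  let σ : Equiv.Perm (Fin n) := Equiv.ofBijective τ (Finite.injective_iff_bijective.mp hτinj)
  have hσ : ∀ k, σ k = τ k := fun k => rfl
  let ε : Fin n → Multiplicative (ZMod 2) :=
    fun m => if d (σ.symm m) = 1 then 1 else Multiplicative.ofAdd 1
  let g : GG n := ⟨ε, σ⟩
  have hgl : g.left = ε := rfl
  have hgr : g.right = σ := rfl
  have hd1 : ∀ k, d k = 1 ∨ d k = -1 := fun k =>
    Int.isUnit_iff.mp (IsUnit.of_mul_eq_one _ (hunit k))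
  have heta : ∀ k, eta n g k = d k := by
    intro k
    rw [eta, hgl, hgr]
    show sgn (ε (σ k)) = d k
    have hsk : σ.symm (σ k) = k := Equiv.symm_apply_apply σ k
    rcases hd1 k with h | h
    · rw [show ε (σ k) = 1 from by simp only [ε, hsk, if_pos h]]
      rw [h]; rfl
    · rw [show ε (σ k) = Multiplicative.ofAdd 1 from by
        simp only [ε, hsk]
        rw [if_neg (by rw [h]; decide)]]
      rw [h]; decide
  have hagree_zel : ∀ k, Phi n g (zel n k) = φ (zel n k) := by
    intro k
    rw [Phi_zel, heta, hgr, hσ, hdτ]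
  have hagree : ∀ i, Phi n g (sx n i) = φ (sx n i) := by
    intro i
    by_cases hi : i = 0
    · subst hi
      have := hagree_zel 0
      rwa [zel_zero] at this
    · have h2s : (2:ℤ) • sx n i = sx n 0 - zel n i := by
        rw [zel]
        have : wel n i = sx n i := by rw [wel, if_neg hi]
        rw [this]
        abel
      have hkey : (2:ℤ) • (Phi n g (sx n i) - φ (sx n i)) = 0 := by
        have hφs : φ ((2:ℤ) • sx n i) = (2:ℤ) • φ (sx n i) := map_zsmul φ _ _
        rw [smul_sub, ← map_zsmul (Phi n g), ← hφs]
        have h0 : Phi n g (sx n 0) = φ (sx n 0) := by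
          have := hagree_zel 0
          rwa [zel_zero] at this
        rw [h2s, map_sub, map_sub, h0, hagree_zel i]
        ring
      have hmem : Phi n g (sx n i) - φ (sx n i) ∈ Submodule.span ℤ (Set.range (sx n)) := by
        refine sub_mem ?_ (fwd (sx_mem n i))
        rw [Phi_sx]
        exact tvec_mem n g i
      exact sub_eq_zero.mp (H2_twotorsion n hmem hkey)
  refine ⟨g, ?_⟩
  apply Subtype.ext
  show PhiAut n g = φ
  apply RingEquiv.ext
  intro y
  show Phi n g y = φ y
  have heq : Phi n g = (φ : SRing n →+* SRing n) := by
    apply hom_ext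
    intro i
    rw [hagree i]
    rfl
  exact RingHom.congr_fun heq y

end Final


theorem gradedAut_iso_semidirect (n : ℕ) [NeZero n] :
    Nonempty (gradedAut n ≃*
      SemidirectProduct (Fin n → Multiplicative (ZMod 2)) (Equiv.Perm (Fin n))
        (permAut n (Multiplicative (ZMod 2)))) :=
  ⟨(MulEquiv.ofBijective (Psi n) ⟨Psi_inj n, Psi_surj n⟩).symm⟩

end
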